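/- arXiv:2306.15754 — 2 statements merged into one kernel-verified Lean document; each statement's English description precedes it below -/
import Mathlib

section
/- Let n ≥ 2 be an even integer, let K : ℝ^n → ℝ be continuous with K e^{nw} ∈ L¹(ℝ^n) for a function w ∈ L^∞_loc(ℝ^n) solving the integral equation (IE). Then there is a constant C such that for every x₀ ∈ ℝ^n, ∫_{B₁(x₀)} |w(x)| dx ≤ C log(|x₀| + 2), where B₁(x₀) is the unit ball centered at x₀. -/
open MeasureTheory Metric Real
open Set
open scoped ENNReal NNReal

/-- The Euclidean Laplacian of `u : ℝⁿ → ℝ` at `x`. -/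
noncomputable def lap {n : ℕ} (u : EuclideanSpace ℝ (Fin n) → ℝ)
    (x : EuclideanSpace ℝ (Fin n)) : ℝ :=
  ∑ i : Fin n, iteratedFDeriv ℝ 2 u x (fun _ => EuclideanSpace.single i 1)

/-- The volume `ω_n` of the unit sphere `Sⁿ ⊂ ℝ^{n+1}`, expressed as `(n+1)` times the
Lebesgue volume of the unit ball of `ℝ^{n+1}`. -/
noncomputable def sphereVol (n : ℕ) : ℝ :=
  (n + 1) * (volume (ball (0 : EuclideanSpace ℝ (Fin (n + 1))) 1)).toReal

/-- `w ∈ L^∞_loc(ℝⁿ)`: `w` is bounded on every bounded set. -/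
def LocBdd {n : ℕ} (w : EuclideanSpace ℝ (Fin n) → ℝ) : Prop :=
  ∀ R : ℝ, ∃ M : ℝ, ∀ x : EuclideanSpace ℝ (Fin n), ‖x‖ ≤ R → |w x| ≤ M

/-- `w` solves the integral equation
`w(x) = (2/ω_n) ∫_{ℝⁿ} log(|y|/|x−y|) K(y) e^{n w(y)} dy`. -/
def SolvesIE (n : ℕ) (K w : EuclideanSpace ℝ (Fin n) → ℝ) : Prop :=
  ∀ x : EuclideanSpace ℝ (Fin n),
    w x = (2 / sphereVol n) * ∫ y, Real.log (‖y‖ / ‖x - y‖) * (K y * Real.exp (n * w y))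

/-- The polynomially cone condition with explicit exponent `γ`: outside the ball of radius
`R₁` one has `|K(x)| ≤ c₂ |x|^γ` everywhere, and `|K(x)| ≥ c₁ |x|^γ` on the cone with vertex
at the origin over the geodesic ball of radius `r₁` around the direction `θ₀`. -/
def PolyConeCondWith (n : ℕ) (γ : ℝ) (K : EuclideanSpace ℝ (Fin n) → ℝ) : Prop :=
  ∃ (R₁ c₁ c₂ r₁ : ℝ) (θ₀ : EuclideanSpace ℝ (Fin n)),
    0 < R₁ ∧ 0 < c₁ ∧ 0 < c₂ ∧ 0 < r₁ ∧ ‖θ₀‖ = 1 ∧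
    (∀ x : EuclideanSpace ℝ (Fin n), R₁ ≤ ‖x‖ → |K x| ≤ c₂ * ‖x‖ ^ γ) ∧
    (∀ x : EuclideanSpace ℝ (Fin n), R₁ ≤ ‖x‖ → ‖‖x‖⁻¹ • x - θ₀‖ < r₁ → c₁ * ‖x‖ ^ γ ≤ |K x|)

/-- The polynomially cone condition `(PCC)` for `K : ℝⁿ → ℝ`. -/
def PCC (n : ℕ) (K : EuclideanSpace ℝ (Fin n) → ℝ) : Prop :=
  ∃ γ : ℝ, (n : ℝ) ≤ γ ∧ PolyConeCondWith n γ K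

lemma aux_log_sub {a b R : ℝ} (ha : 0 < a) (hb : 0 < b) (hR : 0 ≤ R) (hba : b ≤ a + R) :
    Real.log b - Real.log a ≤ max 0 (-Real.log a) + Real.log (1 + R) := by
  rcases le_or_gt a 1 with h1 | h1
  · have hb' : Real.log b ≤ Real.log (1 + R) := by
      apply Real.log_le_log hb; linarith
    have : -Real.log a ≤ max 0 (-Real.log a) := le_max_right _ _
    linarith
  · have hb' : Real.log b ≤ Real.log a + Real.log (1 + R) := by
      rw [← Real.log_mul (by linarith) (by linarith)]
      apply Real.log_le_log hb
      nlinarith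
    have : (0:ℝ) ≤ max 0 (-Real.log a) := le_max_left _ _
    linarith

lemma aux_abs_log_div {a b R : ℝ} (ha : 0 < a) (hb : 0 < b) (hR : 0 ≤ R)
    (h1 : a ≤ b + R) (h2 : b ≤ a + R) :
    |Real.log (a / b)| ≤ max 0 (-Real.log a) + max 0 (-Real.log b) + Real.log (1 + R) := by
  rw [Real.log_div ha.ne' hb.ne', abs_sub_comm, abs_sub_le_iff]
  constructor
  · have := aux_log_sub ha hb hR h2
    have h0 : (0:ℝ) ≤ max 0 (-Real.log b) := le_max_left _ _
    linarith
  · have := aux_log_sub hb ha hR h1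
    have h0 : (0:ℝ) ≤ max 0 (-Real.log a) := le_max_left _ _
    linarith

lemma aux_nontrivial (n : ℕ) (hn : 1 ≤ n) : Nontrivial (EuclideanSpace ℝ (Fin n)) := by
  refine nontrivial_of_ne (EuclideanSpace.single (⟨0, hn⟩ : Fin n) (1:ℝ)) 0 fun h => ?_
  have := congrArg (fun v : EuclideanSpace ℝ (Fin n) => v ⟨0, hn⟩) h
  simp at this

lemma aux_neglog_lintegral_lt_top (n : ℕ) (hn : 1 ≤ n) :
    ∫⁻ z : EuclideanSpace ℝ (Fin n), ENNReal.ofReal (max 0 (-Real.log ‖z‖)) < ⊤ := by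
  haveI := aux_nontrivial n hn
  have hmeas : AEMeasurable (fun z : EuclideanSpace ℝ (Fin n) => max 0 (-Real.log ‖z‖)) volume :=
    ((measurable_const.max (measurable_norm.log.neg))).aemeasurable
  rw [lintegral_eq_lintegral_meas_lt (f := fun z : EuclideanSpace ℝ (Fin n) =>
    max 0 (-Real.log ‖z‖)) volume (Filter.Eventually.of_forall fun z => le_max_left _ _) hmeas]
  have hVlt : volume (ball (0 : EuclideanSpace ℝ (Fin n)) 1) < ⊤ := measure_ball_lt_top
  have step1 : ∀ t ∈ Ioi (0:ℝ), volume {z : EuclideanSpace ℝ (Fin n) | t < max 0 (-Real.log ‖z‖)}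
      ≤ ENNReal.ofReal (Real.exp (-t)) * volume (ball (0 : EuclideanSpace ℝ (Fin n)) 1) := by
    intro t ht
    have ht : (0:ℝ) < t := ht
    have hsub : {z : EuclideanSpace ℝ (Fin n) | t < max 0 (-Real.log ‖z‖)} ⊆
        ball (0 : EuclideanSpace ℝ (Fin n)) (Real.exp (-t)) := by
      intro z hz
      simp only [mem_setOf_eq] at hz
      have hlt : t < -Real.log ‖z‖ := by
        rcases lt_max_iff.1 hz with h | h
        · linarith
        · exact h
      rcases eq_or_ne z 0 with rfl | hz0
      · simp only [norm_zero, Real.log_zero, neg_zero] at hlt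
        linarith
      · have hzpos : (0:ℝ) < ‖z‖ := norm_pos_iff.2 hz0
        have h2 : Real.log ‖z‖ < -t := by linarith
        have h3 : Real.exp (Real.log ‖z‖) < Real.exp (-t) := Real.exp_lt_exp.2 h2
        rw [Real.exp_log hzpos] at h3
        exact mem_ball_zero_iff.2 h3
    calc volume {z : EuclideanSpace ℝ (Fin n) | t < max 0 (-Real.log ‖z‖)}
        ≤ volume (ball (0 : EuclideanSpace ℝ (Fin n)) (Real.exp (-t))) := measure_mono hsub
      _ = ENNReal.ofReal (Real.exp (-t) ^ n) * volume (ball (0 : EuclideanSpace ℝ (Fin n)) 1) := by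
          rw [Measure.addHaar_ball volume 0 (Real.exp_nonneg _)]
          simp [finrank_euclideanSpace_fin]
      _ ≤ ENNReal.ofReal (Real.exp (-t)) * volume (ball (0 : EuclideanSpace ℝ (Fin n)) 1) := by
          gcongr
          calc Real.exp (-t) ^ n ≤ Real.exp (-t) ^ 1 :=
                pow_le_pow_of_le_one (Real.exp_nonneg _)
                  (Real.exp_le_one_iff.2 (by linarith)) hn
            _ = Real.exp (-t) := pow_one _
  calc ∫⁻ t in Ioi (0:ℝ), volume {z : EuclideanSpace ℝ (Fin n) | t < max 0 (-Real.log ‖z‖)}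
      ≤ ∫⁻ t in Ioi (0:ℝ), ENNReal.ofReal (Real.exp (-t)) *
          volume (ball (0 : EuclideanSpace ℝ (Fin n)) 1) :=
        setLIntegral_mono' measurableSet_Ioi step1
    _ = (∫⁻ t in Ioi (0:ℝ), ENNReal.ofReal (Real.exp (-t))) *
          volume (ball (0 : EuclideanSpace ℝ (Fin n)) 1) :=
        lintegral_mul_const _ (ENNReal.measurable_ofReal.comp (Real.measurable_exp.comp
          measurable_neg))
    _ < ⊤ := by
        apply ENNReal.mul_lt_top _ hVlt
        have hInt : IntegrableOn (fun t : ℝ => Real.exp (-1 * t)) (Ioi (0:ℝ)) :=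
          exp_neg_integrableOn_Ioi 0 one_pos
        have hfin := (hasFiniteIntegral_iff_ofReal
          (Filter.Eventually.of_forall fun t => Real.exp_nonneg _)).1 hInt.2
        refine lt_of_le_of_lt (le_of_eq ?_) hfin
        apply lintegral_congr
        intro t
        norm_num


/-- Estimate (2.5): for a solution `w ∈ L^∞_loc` of the integral equation with
`K e^{nw} ∈ L¹(ℝⁿ)`, there is a constant `C` such that
`∫_{B₁(x₀)} |w| dx ≤ C log(|x₀| + 2)` for every `x₀`. -/
theorem unit_ball_integral_bound (n : ℕ) (hn : 2 ≤ n) (hne : Even n)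
    (K w : EuclideanSpace ℝ (Fin n) → ℝ)
    (hKcont : Continuous K)
    (hwloc : LocBdd w)
    (hIE : SolvesIE n K w)
    (hint : Integrable (fun y : EuclideanSpace ℝ (Fin n) => K y * Real.exp (n * w y))) :
    ∃ C : ℝ, ∀ x₀ : EuclideanSpace ℝ (Fin n),
      (∫ x in ball x₀ 1, |w x|) ≤ C * Real.log (‖x₀‖ + 2) := by
  classical
  have hn1 : 1 ≤ n := by omega
  haveI : Nontrivial (EuclideanSpace ℝ (Fin n)) := aux_nontrivial n hn1
  haveI : NullSingletonClass (volume : Measure (EuclideanSpace ℝ (Fin n))) := by infer_instance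
  set f : EuclideanSpace ℝ (Fin n) → ℝ := fun y => K y * Real.exp (n * w y) with hf
  have hfaesm : AEStronglyMeasurable f volume := hint.1
  have hFaem : AEMeasurable (fun y => ENNReal.ofReal |f y|) volume :=
    ENNReal.measurable_ofReal.comp_aemeasurable (continuous_abs.measurable.comp_aemeasurable hfaesm.aemeasurable)
  set F : EuclideanSpace ℝ (Fin n) → ℝ≥0∞ := hFaem.mk _ with hFdef
  have hFmeas : Measurable F := hFaem.measurable_mk
  have hFae : (fun y => ENNReal.ofReal |f y|) =ᵐ[volume] F := hFaem.ae_eq_mk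
  set L : ℝ≥0∞ := ∫⁻ y, F y with hL
  have hLlt : L < ⊤ := by
    rw [hL, ← lintegral_congr_ae hFae]
    calc ∫⁻ y, ENNReal.ofReal |f y|
        = ∫⁻ y, (‖f y‖₊ : ℝ≥0∞) :=
          lintegral_congr fun y => (Real.enorm_eq_ofReal_abs _).symm
      _ < ⊤ := hint.2
  obtain ⟨MK, hMK⟩ := (isCompact_closedBall (0 : EuclideanSpace ℝ (Fin n))
    1).exists_bound_of_continuousOn hKcont.continuousOn
  obtain ⟨Mw, hMw⟩ := hwloc 1
  set B₀ : ℝ := ‖MK‖ * Real.exp (n * ‖Mw‖) with hB₀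
  have hfB : ∀ y : EuclideanSpace ℝ (Fin n), ‖y‖ ≤ 1 → |f y| ≤ B₀ := by
    intro y hy
    have h1 : ‖K y‖ ≤ MK := hMK y (mem_closedBall_zero_iff.2 hy)
    have h2 : |w y| ≤ Mw := hMw y hy
    have h3 : Real.exp (n * w y) ≤ Real.exp (n * ‖Mw‖) := by
      apply Real.exp_le_exp.2
      have : w y ≤ ‖Mw‖ := le_trans (le_trans (le_abs_self _) h2) (le_abs_self _)
      have hn0 : (0:ℝ) ≤ n := Nat.cast_nonneg n
      nlinarith
    calc |f y| = |K y| * Real.exp (n * w y) := by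
          rw [hf]; simp [abs_mul, abs_of_pos (Real.exp_pos _)]
      _ ≤ ‖MK‖ * Real.exp (n * ‖Mw‖) := by
          apply mul_le_mul _ h3 (Real.exp_pos _).le (norm_nonneg _)
          exact le_trans (le_trans (le_of_eq (Real.norm_eq_abs _).symm) h1) (le_abs_self _)
  have hB₀0 : 0 ≤ B₀ := by positivity
  set A : ℝ≥0∞ := ∫⁻ z : EuclideanSpace ℝ (Fin n), ENNReal.ofReal (max 0 (-Real.log ‖z‖))
    with hA
  have hAlt : A < ⊤ := aux_neglog_lintegral_lt_top n hn1
  set V : ℝ≥0∞ := volume (ball (0 : EuclideanSpace ℝ (Fin n)) 1) with hV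
  have hVlt : V < ⊤ := measure_ball_lt_top
  set c : ℝ := 2 / sphereVol n with hc
  have hsph : 0 < sphereVol n := by
    apply mul_pos (by positivity)
    exact ENNReal.toReal_pos (measure_ball_pos volume 0 one_pos).ne' measure_ball_lt_top.ne
  have hcpos : 0 < c := by positivity
  set h₁ : EuclideanSpace ℝ (Fin n) → ℝ≥0∞ :=
    fun y => ENNReal.ofReal (max 0 (-Real.log ‖y‖)) with hh₁
  have hh₁meas : Measurable h₁ :=
    ENNReal.measurable_ofReal.comp (measurable_const.max measurable_norm.log.neg)
  set I₁ : ℝ≥0∞ := ∫⁻ y, h₁ y * F y with hI₁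
  have hI₁le : I₁ ≤ A * ENNReal.ofReal B₀ := by
    rw [hI₁, hA, ← lintegral_mul_const _ hh₁meas]
    apply lintegral_mono_ae
    filter_upwards [hFae] with y hy
    rcases le_or_gt ‖y‖ 1 with h | h
    · rw [← hy]
      exact mul_le_mul_right (ENNReal.ofReal_le_ofReal (hfB y h)) _
    · have hz : h₁ y = 0 := by
        have : max 0 (-Real.log ‖y‖) = 0 :=
          max_eq_left (neg_nonpos.2 (Real.log_nonneg h.le))
        simp [hh₁, this, Real.log_nonneg h.le]
      simp [hz]
  have hI₁lt : I₁ < ⊤ := lt_of_le_of_lt hI₁le (ENNReal.mul_lt_top hAlt ENNReal.ofReal_lt_top)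
  have hl2 : 0 < Real.log 2 := Real.log_pos one_lt_two
  refine ⟨c * (V.toReal * I₁.toReal + A.toReal * L.toReal) / Real.log 2
    + c * (V.toReal * L.toReal), ?_⟩
  intro x₀
  set ℓ : ℝ := Real.log (‖x₀‖ + 2) with hℓ
  have hℓ2 : Real.log 2 ≤ ℓ := Real.log_le_log two_pos (by linarith [norm_nonneg x₀])
  have hℓpos : 0 < ℓ := lt_of_lt_of_le hl2 hℓ2
  set c₃ : ℝ≥0∞ := ENNReal.ofReal ℓ with hc₃
  set h₂ : EuclideanSpace ℝ (Fin n) → EuclideanSpace ℝ (Fin n) → ℝ≥0∞ :=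
    fun x y => ENNReal.ofReal (max 0 (-Real.log ‖x - y‖)) with hh₂
  have hh₂joint : Measurable (Function.uncurry fun x y :
      EuclideanSpace ℝ (Fin n) => h₂ x y * F y) := by
    apply Measurable.mul
    · exact ENNReal.measurable_ofReal.comp (measurable_const.max
        ((measurable_fst.sub measurable_snd).norm.log.neg))
    · exact hFmeas.comp measurable_snd
  have hh₂meas : ∀ x, Measurable fun y => h₂ x y :=
    fun x => ENNReal.measurable_ofReal.comp
      (measurable_const.max ((measurable_const.sub measurable_id).norm.log.neg))
  have hh₂measx : ∀ y, Measurable fun x => h₂ x y :=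
    fun y => ENNReal.measurable_ofReal.comp
      (measurable_const.max ((measurable_id.sub measurable_const).norm.log.neg))
  have hsplit : ∀ x : EuclideanSpace ℝ (Fin n), (∫⁻ y, (h₁ y + h₂ x y + c₃) * F y)
      = I₁ + (∫⁻ y, h₂ x y * F y) + c₃ * L := by
    intro x
    have e1 : (fun y => (h₁ y + h₂ x y + c₃) * F y)
        = fun y => (h₁ y * F y + h₂ x y * F y) + c₃ * F y := by
      funext y; ring
    have m1 : Measurable fun y => h₁ y * F y := hh₁meas.mul hFmeas
    have m2 : Measurable fun y => h₂ x y * F y := (hh₂meas x).mul hFmeas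
    rw [e1, lintegral_add_left (f := fun y => h₁ y * F y + h₂ x y * F y) (m1.add m2), lintegral_add_left m1,
      lintegral_const_mul _ hFmeas]
  -- pointwise claim
  have h0ae : ∀ᵐ y : EuclideanSpace ℝ (Fin n) ∂volume, y ≠ 0 := by
    rw [ae_iff]
    have hset : {y : EuclideanSpace ℝ (Fin n) | ¬ y ≠ 0} = {0} := by ext y; simp
    rw [hset]
    exact measure_singleton 0
  have claim1 : ∀ x ∈ ball x₀ 1, ENNReal.ofReal |w x| ≤
      ENNReal.ofReal c * (I₁ + (∫⁻ y, h₂ x y * F y) + c₃ * L) := by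
    intro x hx
    rw [← hsplit x]
    set H : ℝ≥0∞ := ∫⁻ y, (h₁ y + h₂ x y + c₃) * F y with hH
    have hxnorm : ‖x‖ ≤ ‖x₀‖ + 1 := by
      have hd : dist x x₀ < 1 := mem_ball.1 hx
      have : ‖x - x₀‖ < 1 := by rwa [← dist_eq_norm]
      calc ‖x‖ = ‖(x - x₀) + x₀‖ := by rw [sub_add_cancel]
        _ ≤ ‖x - x₀‖ + ‖x₀‖ := norm_add_le _ _
        _ ≤ ‖x₀‖ + 1 := by linarith
    set g : EuclideanSpace ℝ (Fin n) → ℝ :=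
      fun y => Real.log (‖y‖ / ‖x - y‖) * f y with hg
    have hgaem : AEStronglyMeasurable g volume := by
      apply AEStronglyMeasurable.mul _ hfaesm
      exact (Measurable.log (measurable_norm.div
        ((measurable_const.sub measurable_id).norm))).aestronglyMeasurable
    have hxae : ∀ᵐ y : EuclideanSpace ℝ (Fin n) ∂volume, y ≠ x := by
      rw [ae_iff]
      have hset : {y : EuclideanSpace ℝ (Fin n) | ¬ y ≠ x} = {x} := by ext y; simp
      rw [hset]
      exact measure_singleton x
    have hdom : ∀ᵐ y ∂volume, (‖g y‖₊ : ℝ≥0∞) ≤ (h₁ y + h₂ x y + c₃) * F y := by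
      filter_upwards [hFae, h0ae, hxae] with y hFy hy0 hyx
      have hy : (0:ℝ) < ‖y‖ := norm_pos_iff.2 hy0
      have hxy : (0:ℝ) < ‖x - y‖ := by
        rw [norm_pos_iff, sub_ne_zero]; exact fun h => hyx h.symm
      have t1 : ‖y‖ ≤ ‖x - y‖ + (‖x₀‖ + 1) := by
        have : ‖y‖ = ‖x - (x - y)‖ := by rw [sub_sub_cancel]
        rw [this]
        calc ‖x - (x - y)‖ ≤ ‖x‖ + ‖x - y‖ := norm_sub_le _ _
          _ ≤ ‖x - y‖ + (‖x₀‖ + 1) := by linarith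
      have t2 : ‖x - y‖ ≤ ‖y‖ + (‖x₀‖ + 1) := by
        calc ‖x - y‖ ≤ ‖x‖ + ‖y‖ := norm_sub_le _ _
          _ ≤ ‖y‖ + (‖x₀‖ + 1) := by linarith
      have hkey := aux_abs_log_div hy hxy (by positivity : (0:ℝ) ≤ ‖x₀‖ + 1) t1 t2
      have hrw : (1:ℝ) + (‖x₀‖ + 1) = ‖x₀‖ + 2 := by ring
      rw [hrw] at hkey
      calc (‖g y‖₊ : ℝ≥0∞) = ENNReal.ofReal |g y| := Real.enorm_eq_ofReal_abs _
        _ = ENNReal.ofReal (|Real.log (‖y‖ / ‖x - y‖)| * |f y|) := by rw [hg, abs_mul]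
        _ ≤ ENNReal.ofReal ((max 0 (-Real.log ‖y‖) + max 0 (-Real.log ‖x - y‖) + ℓ) * |f y|) :=
            ENNReal.ofReal_le_ofReal (mul_le_mul_of_nonneg_right hkey (abs_nonneg _))
        _ = (h₁ y + h₂ x y + c₃) * ENNReal.ofReal |f y| := by
            rw [ENNReal.ofReal_mul (by positivity), ENNReal.ofReal_add (by positivity) hℓpos.le,
              ENNReal.ofReal_add (le_max_left _ _) (le_max_left _ _)]
        _ = (h₁ y + h₂ x y + c₃) * F y := by rw [hFy]
    rcases eq_top_or_lt_top H with hHtop | hHlt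
    · rw [hHtop, ENNReal.mul_top (by simpa using (ENNReal.ofReal_pos.2 hcpos).ne')]
      exact le_top
    · have hgint : Integrable g := by
        refine ⟨hgaem, ?_⟩
        refine lt_of_le_of_lt (lintegral_mono_ae hdom) hHlt
      have hwx : |w x| ≤ c * H.toReal := by
        have hIEx : w x = c * ∫ y, g y := hIE x
        rw [hIEx, abs_mul, abs_of_pos hcpos]
        apply mul_le_mul_of_nonneg_left _ hcpos.le
        have h1 : |∫ y, g y| ≤ ∫ y, |g y| := by
          calc |∫ y, g y| = ‖∫ y, g y‖ := (Real.norm_eq_abs _).symm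
            _ ≤ ∫ y, ‖g y‖ := norm_integral_le_integral_norm _
            _ = ∫ y, |g y| := by simp [Real.norm_eq_abs]
        have h2 : ∫ y, |g y| = (∫⁻ y, ENNReal.ofReal |g y|).toReal :=
          integral_eq_lintegral_of_nonneg_ae
            (Filter.Eventually.of_forall fun y => abs_nonneg _)
            (continuous_abs.comp_aestronglyMeasurable hgaem)
        have h3 : (∫⁻ y, ENNReal.ofReal |g y|) ≤ H := by
          refine le_trans (le_of_eq (lintegral_congr fun y =>
            (Real.enorm_eq_ofReal_abs _).symm)) (lintegral_mono_ae hdom)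
        calc |∫ y, g y| ≤ ∫ y, |g y| := h1
          _ = (∫⁻ y, ENNReal.ofReal |g y|).toReal := h2
          _ ≤ H.toReal := ENNReal.toReal_mono hHlt.ne h3
      calc ENNReal.ofReal |w x| ≤ ENNReal.ofReal (c * H.toReal) :=
            ENNReal.ofReal_le_ofReal hwx
        _ = ENNReal.ofReal c * ENNReal.ofReal H.toReal := ENNReal.ofReal_mul hcpos.le
        _ = ENNReal.ofReal c * H := by rw [ENNReal.ofReal_toReal hHlt.ne]
  -- integrate claim1 over the ball
  have hJmeas : Measurable fun x => ∫⁻ y, h₂ x y * F y :=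
    Measurable.lintegral_prod_right hh₂joint
  have main2 : (∫⁻ x in ball x₀ 1, ENNReal.ofReal |w x|) ≤
      ENNReal.ofReal c * (V * I₁ + A * L + V * (c₃ * L)) := by
    have step : (∫⁻ x in ball x₀ 1, ENNReal.ofReal |w x|) ≤
        ∫⁻ x in ball x₀ 1, ENNReal.ofReal c *
          (I₁ + (∫⁻ y, h₂ x y * F y) + c₃ * L) := by
      apply lintegral_mono_ae
      rw [ae_restrict_iff' measurableSet_ball]
      exact Filter.Eventually.of_forall claim1
    refine le_trans step ?_
    rw [lintegral_const_mul' _ _ ENNReal.ofReal_ne_top]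
    apply mul_le_mul_right
    have hballV : volume (ball x₀ 1) = V := by
      rw [hV, Measure.addHaar_ball_center]
    have e2 : (∫⁻ x in ball x₀ 1, (I₁ + (∫⁻ y, h₂ x y * F y) + c₃ * L))
        = V * I₁ + (∫⁻ x in ball x₀ 1, ∫⁻ y, h₂ x y * F y) + V * (c₃ * L) := by
      rw [lintegral_add_left (by exact measurable_const.add hJmeas),
        lintegral_add_left measurable_const, lintegral_const, lintegral_const,
        Measure.restrict_apply_univ, hballV, mul_comm I₁ V, mul_comm _ V]
    rw [e2]
    have hswapbd : (∫⁻ x in ball x₀ 1, ∫⁻ y, h₂ x y * F y) ≤ A * L := by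
      rw [lintegral_lintegral_swap hh₂joint.aemeasurable]
      have inner_bd : ∀ y : EuclideanSpace ℝ (Fin n),
          (∫⁻ x in ball x₀ 1, h₂ x y * F y) ≤ A * F y := by
        intro y
        rw [lintegral_mul_const _ (hh₂measx y)]
        apply mul_le_mul_left
        calc (∫⁻ x in ball x₀ 1, h₂ x y) ≤ ∫⁻ x, h₂ x y :=
              setLIntegral_le_lintegral _ _
          _ = A := by
              rw [hA]
              exact lintegral_sub_right_eq_self
                (fun z => ENNReal.ofReal (max 0 (-Real.log ‖z‖))) y
      calc (∫⁻ y, ∫⁻ x in ball x₀ 1, h₂ x y * F y) ≤ ∫⁻ y, A * F y :=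
            lintegral_mono inner_bd
        _ = A * L := lintegral_const_mul _ hFmeas
    exact add_le_add (add_le_add_right hswapbd _) le_rfl
  -- finiteness of the bound
  have hc₃top : c₃ ≠ ⊤ := ENNReal.ofReal_ne_top
  have hT1 : V * I₁ ≠ ⊤ := ENNReal.mul_ne_top hVlt.ne hI₁lt.ne
  have hT2 : A * L ≠ ⊤ := ENNReal.mul_ne_top hAlt.ne hLlt.ne
  have hT3 : V * (c₃ * L) ≠ ⊤ := ENNReal.mul_ne_top hVlt.ne (ENNReal.mul_ne_top hc₃top hLlt.ne)
  have hTtop : ENNReal.ofReal c * (V * I₁ + A * L + V * (c₃ * L)) ≠ ⊤ := by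
    apply ENNReal.mul_ne_top ENNReal.ofReal_ne_top
    rw [ENNReal.add_ne_top, ENNReal.add_ne_top]
    exact ⟨⟨hT1, hT2⟩, hT3⟩
  -- conclude
  by_cases hIntOn : IntegrableOn (fun x => |w x|) (ball x₀ 1) volume
  · have heq : (∫ x in ball x₀ 1, |w x|)
        = (∫⁻ x in ball x₀ 1, ENNReal.ofReal |w x|).toReal :=
      integral_eq_lintegral_of_nonneg_ae
        (Filter.Eventually.of_forall fun x => abs_nonneg _) hIntOn.aestronglyMeasurable
    rw [heq]
    have hb1 : (∫⁻ x in ball x₀ 1, ENNReal.ofReal |w x|).toReal ≤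
        (ENNReal.ofReal c * (V * I₁ + A * L + V * (c₃ * L))).toReal :=
      ENNReal.toReal_mono hTtop main2
    have hne1 : V * I₁ + A * L ≠ ⊤ := ENNReal.add_ne_top.2 ⟨hT1, hT2⟩
    have hb2 : (ENNReal.ofReal c * (V * I₁ + A * L + V * (c₃ * L))).toReal
        = c * (V.toReal * I₁.toReal + A.toReal * L.toReal + V.toReal * (ℓ * L.toReal)) := by
      rw [ENNReal.toReal_mul, ENNReal.toReal_add hne1 hT3, ENNReal.toReal_add hT1 hT2,
        ENNReal.toReal_mul, ENNReal.toReal_mul, ENNReal.toReal_mul, ENNReal.toReal_mul,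
        ENNReal.toReal_ofReal hcpos.le, ENNReal.toReal_ofReal hℓpos.le]
    have final : c * (V.toReal * I₁.toReal + A.toReal * L.toReal + V.toReal * (ℓ * L.toReal))
        ≤ (c * (V.toReal * I₁.toReal + A.toReal * L.toReal) / Real.log 2
          + c * (V.toReal * L.toReal)) * ℓ := by
      set D := c * (V.toReal * I₁.toReal + A.toReal * L.toReal) with hD
      have hD0 : 0 ≤ D := by positivity
      have key : D ≤ D / Real.log 2 * ℓ := by
        rw [div_mul_eq_mul_div, le_div_iff₀ hl2]
        exact mul_le_mul_of_nonneg_left hℓ2 hD0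
      have e : c * (V.toReal * I₁.toReal + A.toReal * L.toReal + V.toReal * (ℓ * L.toReal))
          = D + c * (V.toReal * L.toReal) * ℓ := by rw [hD]; ring
      rw [e, add_mul]
      exact add_le_add key le_rfl
    calc (∫⁻ x in ball x₀ 1, ENNReal.ofReal |w x|).toReal
        ≤ (ENNReal.ofReal c * (V * I₁ + A * L + V * (c₃ * L))).toReal := hb1
      _ = c * (V.toReal * I₁.toReal + A.toReal * L.toReal + V.toReal * (ℓ * L.toReal)) := hb2
      _ ≤ _ := final
  · rw [integral_undef hIntOn]
    have hC : 0 ≤ c * (V.toReal * I₁.toReal + A.toReal * L.toReal) / Real.log 2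
        + c * (V.toReal * L.toReal) := by positivity
    exact mul_nonneg hC hℓpos.le
end

section
/- Let v : ℝ² → ℝ be harmonic on all of ℝ² and suppose there is a constant C > 0 such that the unit-ball averages satisfy (1/|B₁(x₀)|) ∫_{B₁(x₀)} v(x) dx ≤ C + C log(2 + |x₀|) for every x₀ ∈ ℝ². Then v is constant. -/
open MeasureTheory Metric Real

section Aux
open Filter Set intervalIntegral

namespace HLGC

lemma exists_primitive {g : ℂ → ℂ} (hg : Differentiable ℂ g) :
    ∃ F : ℂ → ℂ, ∀ z, HasDerivAt F (g z) z := by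
  set a : ℕ → ℂ := fun n => iteratedDeriv n g 0 with ha
  set t : ℕ → ℂ → ℂ := fun n z => ((n.factorial : ℂ))⁻¹ * ((n + 1 : ℂ))⁻¹ * z ^ (n + 1) * a n with ht
  set d : ℕ → ℂ → ℂ := fun n z => ((n.factorial : ℂ))⁻¹ * z ^ n * a n with hd
  have htaylor : ∀ w : ℂ, HasSum (fun n => (n.factorial : ℂ)⁻¹ • w ^ n • a n) (g w) := by
    intro w
    simpa using Complex.hasSum_taylorSeries_of_entire hg 0 w
  have hderiv : ∀ n (w : ℂ), HasDerivAt (t n) (d n w) w := by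
    intro n w
    have h1 : HasDerivAt (fun z : ℂ => z ^ (n + 1)) ((n + 1 : ℂ) * w ^ n) w := by
      simpa using hasDerivAt_pow (n + 1) w
    have h2 := (h1.const_mul ((n.factorial : ℂ)⁻¹ * ((n + 1 : ℂ))⁻¹)).mul_const (a n)
    refine h2.congr_deriv ?_; symm
    have hn1 : ((n : ℂ) + 1) ≠ 0 := Nat.cast_add_one_ne_zero n
    rw [hd]
    have hc : ((n : ℂ) + 1)⁻¹ * ((n : ℂ) + 1) = 1 := inv_mul_cancel₀ hn1
    calc (↑n.factorial : ℂ)⁻¹ * w ^ n * a n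
        = (↑n.factorial : ℂ)⁻¹ * (((n : ℂ) + 1)⁻¹ * ((n : ℂ) + 1)) * w ^ n * a n := by
          rw [hc]; ring
      _ = (↑n.factorial : ℂ)⁻¹ * ((n:ℂ) + 1)⁻¹ * (((n:ℂ) + 1) * w ^ n) * a n := by ring
  refine ⟨fun z => ∑' n, t n z, fun z => ?_⟩
  set R : ℝ := ‖z‖ + 1 with hR
  have hR0 : 0 < R := by positivity
  -- summable bound
  set u : ℕ → ℝ := fun n => (n.factorial : ℝ)⁻¹ * R ^ n * ‖a n‖ with hu
  have hu0 : ∀ n, 0 ≤ u n := fun n => by positivity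
  have hxsum := (htaylor (2 * R : ℝ)).summable
  have hxto := hxsum.tendsto_atTop_zero
  have hxev : ∀ᶠ n in atTop, ‖(n.factorial : ℂ)⁻¹ • ((2 * R : ℝ) : ℂ) ^ n • a n‖ < 1 :=
    NormedAddCommGroup.tendsto_nhds_zero.mp hxto 1 one_pos
  have hueq : ∀ n, u n = (2 : ℝ)⁻¹ ^ n * ‖(n.factorial : ℂ)⁻¹ • ((2 * R : ℝ) : ℂ) ^ n • a n‖ := by
    intro n
    simp only [norm_smul, norm_inv, norm_pow, Complex.norm_natCast, Complex.norm_real,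
      Real.norm_eq_abs, hu]
    rw [abs_of_pos (by positivity : (0:ℝ) < 2 * R)]
    rw [mul_pow]
    field_simp
    rw [mul_assoc, ← mul_pow]; norm_num
  have husum : Summable u := by
    obtain ⟨N, hN⟩ := Filter.eventually_atTop.mp hxev
    rw [← summable_nat_add_iff N]
    have hgeom : Summable (fun n : ℕ => (2:ℝ)⁻¹ ^ (n + N)) :=
      ((summable_geometric_of_lt_one (r := (2:ℝ)⁻¹) (by norm_num) (by norm_num)).mul_right ((2:ℝ)⁻¹ ^ N)).congr
        (fun n => by rw [pow_add])
    refine Summable.of_nonneg_of_le (fun n => hu0 _) (fun n => ?_) hgeom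
    rw [hueq]
    calc (2:ℝ)⁻¹ ^ (n + N) * ‖(((n+N).factorial : ℂ))⁻¹ • ((2 * R : ℝ) : ℂ) ^ (n + N) • a (n + N)‖
        ≤ (2:ℝ)⁻¹ ^ (n + N) * 1 := by
          apply mul_le_mul_of_nonneg_left (le_of_lt (hN _ (Nat.le_add_left N n))) (by positivity)
      _ = (2:ℝ)⁻¹ ^ (n + N) := mul_one _
  -- apply the tsum derivative theorem
  set f' : ℕ → ℂ → ℂ →L[ℂ] ℂ := fun n w => (1 : ℂ →L[ℂ] ℂ).smulRight (d n w) with hf'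
  have hfd : ∀ n, ∀ w ∈ ball (0:ℂ) R, HasFDerivAt (t n) (f' n w) w := by
    intro n w _
    exact hasDerivAt_iff_hasFDerivAt.mp (hderiv n w)
  have hfb : ∀ n, ∀ w ∈ ball (0:ℂ) R, ‖f' n w‖ ≤ u n := by
    intro n w hw
    rw [hf']
    rw [ContinuousLinearMap.norm_smulRight_apply, show ‖(1 : ℂ →L[ℂ] ℂ)‖ = 1 from norm_one, one_mul]
    simp only [hd, norm_mul, norm_inv, norm_pow, Complex.norm_natCast]
    simp only [hu]
    have hwn : ‖w‖ ^ n ≤ R ^ n := pow_le_pow_left₀ (norm_nonneg _) (le_of_lt (mem_ball_zero_iff.mp hw)) n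
    gcongr
  have hsum0 : Summable fun n => t n 0 := by
    apply summable_zero.congr
    intro n
    simp [ht, zero_pow (Nat.succ_ne_zero n)]
  have hmain := hasFDerivAt_tsum_of_isPreconnected husum isOpen_ball
    (convex_ball (0:ℂ) R).isPreconnected hfd hfb
    (mem_ball_self hR0) hsum0 (mem_ball_zero_iff.mpr (by rw [hR]; linarith))
  have hsumf' : Summable fun n => f' n z :=
    Summable.of_norm_bounded husum (fun n => hfb n z (mem_ball_zero_iff.mpr (by rw [hR]; linarith)))
  have hev := hmain.hasDerivAt
  have : (∑' n, f' n z) 1 = g z := by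
    have h1 : (∑' n, f' n z) 1 = ∑' n, (f' n z) 1 :=
      (ContinuousLinearMap.apply ℂ ℂ (1:ℂ)).map_tsum hsumf'
    rw [h1]
    have h2 : ∀ n, (f' n z) 1 = d n z := by
      intro n
      simp [hf']
    simp_rw [h2]
    rw [← (htaylor z).tsum_eq]
    congr 1
    ext n
    simp [hd, smul_eq_mul]
    ring
  rwa [this] at hev


lemma entire_g (u : ℂ → ℝ) (hu : ContDiff ℝ 2 u)
    (hh : ∀ z, fderiv ℝ (fderiv ℝ u) z 1 1 + fderiv ℝ (fderiv ℝ u) z Complex.I Complex.I = 0) :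
    Differentiable ℂ (fun z => (↑(fderiv ℝ u z 1) - ↑(fderiv ℝ u z Complex.I) * Complex.I : ℂ)) := by
  have hud : Differentiable ℝ u := hu.differentiable (by norm_num)
  have hfd : ContDiff ℝ 1 (fderiv ℝ u) := hu.fderiv_right (by norm_num)
  intro z
  set Dv := fderiv ℝ (fderiv ℝ u) z with hDvdef
  have h1 : HasFDerivAt (fderiv ℝ u) Dv z := ((hfd.differentiable one_ne_zero) z).hasFDerivAt
  have hsymm : ∀ a b, Dv a b = Dv b a :=
    second_derivative_symmetric (fun y => (hud y).hasFDerivAt) h1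
  have hharm : Dv 1 1 + Dv Complex.I Complex.I = 0 := hh z
  have hII : Dv Complex.I Complex.I = -(Dv 1 1) := by linarith
  -- real derivative of g
  have hA : HasFDerivAt (fun w => fderiv ℝ u w 1)
      ((ContinuousLinearMap.apply ℝ ℝ (1:ℂ)).comp Dv) z :=
    (ContinuousLinearMap.apply ℝ ℝ (1:ℂ)).hasFDerivAt.comp z h1
  have hB : HasFDerivAt (fun w => fderiv ℝ u w Complex.I)
      ((ContinuousLinearMap.apply ℝ ℝ (Complex.I)).comp Dv) z :=
    (ContinuousLinearMap.apply ℝ ℝ (Complex.I)).hasFDerivAt.comp z h1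
  have hA' : HasFDerivAt (fun w => (↑(fderiv ℝ u w 1) : ℂ))
      (Complex.ofRealCLM.comp ((ContinuousLinearMap.apply ℝ ℝ (1:ℂ)).comp Dv)) z :=
    Complex.ofRealCLM.hasFDerivAt.comp z hA
  have hB' : HasFDerivAt (fun w => (↑(fderiv ℝ u w Complex.I) : ℂ))
      (Complex.ofRealCLM.comp ((ContinuousLinearMap.apply ℝ ℝ (Complex.I)).comp Dv)) z :=
    Complex.ofRealCLM.hasFDerivAt.comp z hB
  have hB'' := hB'.mul_const Complex.I
  have hL := hA'.sub hB''
  set m : ℂ := (↑(Dv 1 1) - ↑(Dv 1 Complex.I) * Complex.I : ℂ) with hm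
  have hEq : (ContinuousLinearMap.restrictScalars ℝ
      ((ContinuousLinearMap.mul ℂ ℂ) m)) =
      (Complex.ofRealCLM.comp ((ContinuousLinearMap.apply ℝ ℝ (1:ℂ)).comp Dv) -
        Complex.I • Complex.ofRealCLM.comp
          ((ContinuousLinearMap.apply ℝ ℝ (Complex.I)).comp Dv)) := by
    ext w
    have hw : w = w.re • (1:ℂ) + w.im • Complex.I := by
      simpa [Complex.real_smul] using (Complex.re_add_im w).symm
    have hDvw : ∀ x : ℂ, Dv w x = w.re * Dv 1 x + w.im * Dv Complex.I x := by
      intro x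
      conv_lhs => rw [hw]
      rw [map_add, ContinuousLinearMap.add_apply, _root_.map_smul, _root_.map_smul]
      simp
    simp only [ContinuousLinearMap.coe_restrictScalars', ContinuousLinearMap.mul_apply',
      ContinuousLinearMap.sub_apply, ContinuousLinearMap.smul_apply,
      ContinuousLinearMap.comp_apply, ContinuousLinearMap.apply_apply,
      Complex.ofRealCLM_apply]
    rw [hDvw 1, hDvw Complex.I, hsymm Complex.I 1, hII]
    rw [hm]
    apply Complex.ext <;> simp [Complex.mul_re, Complex.mul_im] <;> ring
  have : HasFDerivAt (fun z => (↑(fderiv ℝ u z 1) - ↑(fderiv ℝ u z Complex.I) * Complex.I : ℂ))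
      ((ContinuousLinearMap.mul ℂ ℂ) m) z := by
    exact hasFDerivAt_of_restrictScalars ℝ hL hEq
  exact this.differentiableAt



section MVP
variable (u : ℂ → ℝ) {F : ℂ → ℂ}

lemma uconst (hu : ContDiff ℝ 2 u)
    (hF : ∀ z, HasDerivAt F ((↑(fderiv ℝ u z 1) - ↑(fderiv ℝ u z Complex.I) * Complex.I : ℂ)) z)
    (z c : ℂ) : u z - (F z).re = u c - (F c).re := by
  have hud : Differentiable ℝ u := hu.differentiable (by norm_num)
  have hFdiff : Differentiable ℂ F := fun w => (hF w).differentiableAt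
  apply is_const_of_fderiv_eq_zero (𝕜 := ℝ) (f := fun z => u z - (F z).re)
  · exact hud.sub (Complex.reCLM.differentiable.comp (hFdiff.restrictScalars (𝕜 := ℝ)))
  · intro w
    have hFr : HasFDerivAt F
        ((ContinuousLinearMap.smulRight (1 : ℂ →L[ℂ] ℂ)
          ((↑(fderiv ℝ u w 1) - ↑(fderiv ℝ u w Complex.I) * Complex.I : ℂ))).restrictScalars ℝ) w :=
      (hasDerivAt_iff_hasFDerivAt.mp (hF w)).restrictScalars ℝ
    have hre := Complex.reCLM.hasFDerivAt.comp w hFr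
    have hφ := ((hud w).hasFDerivAt.sub hre)
    show fderiv ℝ (fun x => u x - (⇑Complex.reCLM ∘ F) x) w = 0
    rw [show (fun x => u x - (⇑Complex.reCLM ∘ F) x) = u - ⇑Complex.reCLM ∘ F from rfl, hφ.fderiv]
    ext ξ
    simp only [ContinuousLinearMap.sub_apply, ContinuousLinearMap.comp_apply,
      ContinuousLinearMap.coe_restrictScalars', ContinuousLinearMap.smulRight_apply,
      ContinuousLinearMap.one_apply, Complex.reCLM_apply, ContinuousLinearMap.zero_apply,
      smul_eq_mul]
    have hξ : ξ = ξ.re • (1:ℂ) + ξ.im • Complex.I := by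
      simpa [Complex.real_smul] using (Complex.re_add_im ξ).symm
    have hlin : fderiv ℝ u w ξ = ξ.re * fderiv ℝ u w 1 + ξ.im * fderiv ℝ u w Complex.I := by
      conv_lhs => rw [hξ]
      rw [map_add, _root_.map_smul, _root_.map_smul]
      simp
    rw [hlin]
    simp [Complex.mul_re]
    try ring

lemma circle_mvp (hu : ContDiff ℝ 2 u)
    (hF : ∀ z, HasDerivAt F ((↑(fderiv ℝ u z 1) - ↑(fderiv ℝ u z Complex.I) * Complex.I : ℂ)) z)
    (c : ℂ) {s : ℝ} (hs : 0 < s) :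
    ∫ θ in (0:ℝ)..(2*π), u (circleMap c s θ) = 2 * π * u c := by
  have hFdiff : Differentiable ℂ F := fun w => (hF w).differentiableAt
  have hcauchy := (hFdiff.diffContOnCl (s := ball c s)).circleIntegral_sub_inv_smul (c := c) (w := c) (mem_ball_self hs)
  have hunfold : (∮ z in C(c, s), (z - c)⁻¹ • F z)
      = ∫ θ in (0:ℝ)..(2*π), Complex.I • F (circleMap c s θ) := by
    rw [circleIntegral]
    apply intervalIntegral.integral_congr
    intro θ _
    have hne : circleMap 0 s θ ≠ 0 := by
      simpa using circleMap_ne_center (c := 0) (R := s) (ne_of_gt hs) (θ := θ)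
    show deriv (circleMap c s) θ • (circleMap c s θ - c)⁻¹ • F (circleMap c s θ)
        = Complex.I • F (circleMap c s θ)
    rw [deriv_circleMap, circleMap_sub_center, smul_smul]
    congr 1
    field_simp
    try ring
  have hFcirc : (∫ θ in (0:ℝ)..(2*π), F (circleMap c s θ)) = 2 * (π : ℂ) * F c := by
    have h2 : Complex.I • (∫ θ in (0:ℝ)..(2*π), F (circleMap c s θ))
        = (2 * (π:ℂ) * Complex.I) • F c := by
      rw [← intervalIntegral.integral_smul, ← hunfold, hcauchy]
    have := h2
    rw [smul_eq_mul, smul_eq_mul] at this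
    apply mul_left_cancel₀ Complex.I_ne_zero
    rw [this]; ring
  have hint : IntervalIntegrable (fun θ => (F (circleMap c s θ)).re) volume 0 (2*π) :=
    ((Complex.continuous_re.comp hFdiff.continuous).comp (continuous_circleMap c s)).intervalIntegrable _ _
  have hFre : (∫ θ in (0:ℝ)..(2*π), (F (circleMap c s θ)).re) = 2 * π * (F c).re := by
    have hFint : IntervalIntegrable (fun θ => F (circleMap c s θ)) volume 0 (2*π) :=
      (hFdiff.continuous.comp (continuous_circleMap c s)).intervalIntegrable _ _
    have := Complex.reCLM.intervalIntegral_comp_comm hFint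
    have h3 : (∫ θ in (0:ℝ)..(2*π), (F (circleMap c s θ)).re)
        = ((∫ θ in (0:ℝ)..(2*π), F (circleMap c s θ)) : ℂ).re := by
      exact_mod_cast this
    rw [h3, hFcirc]
    simp [Complex.mul_re]
  have hk := uconst u hu hF
  calc ∫ θ in (0:ℝ)..(2*π), u (circleMap c s θ)
      = ∫ θ in (0:ℝ)..(2*π), ((F (circleMap c s θ)).re + (u c - (F c).re)) := by
        apply intervalIntegral.integral_congr
        intro θ _
        show u (circleMap c s θ) = (F (circleMap c s θ)).re + (u c - (F c).re)
        have := hk (circleMap c s θ) c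
        linarith
    _ = (∫ θ in (0:ℝ)..(2*π), (F (circleMap c s θ)).re) + (2*π - 0) • (u c - (F c).re) := by
        rw [intervalIntegral.integral_add hint (intervalIntegrable_const)]
        rw [intervalIntegral.integral_const]
    _ = 2 * π * u c := by rw [hFre]; simp; ring

end MVP


lemma polar_ball (f : ℂ → ℝ) (hf : Continuous f) (c : ℂ) {r : ℝ} (hr : 0 < r) :
    ∫ z in ball c r, f z
      = ∫ ρ in Set.Ioo (0:ℝ) r, ρ * ∫ θ in (-π)..π, f (circleMap c ρ θ) := by
  have hcirc : ∀ ρ θ : ℝ, c + Complex.polarCoord.symm (ρ, θ) = circleMap c ρ θ := by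
    intro ρ θ
    simp only [Complex.polarCoord_symm_apply, circleMap, Complex.exp_mul_I]
    push_cast
    ring
  have htrans : ∫ z in ball c r, f z = ∫ z in ball (0:ℂ) r, f (c + z) := by
    have h := (measurePreserving_add_left volume c).setIntegral_preimage_emb
      (measurableEmbedding_addLeft c) f (ball c r)
    rw [← h, preimage_add_ball, sub_self]
  rw [htrans]
  set h0 : ℂ → ℝ := fun w => f (c + w) with hh0
  set G : ℝ × ℝ → ℝ := fun q => q.1 • h0 (Complex.polarCoord.symm q) with hG
  have hGcont : Continuous G := by
    simp only [hG, hh0, Complex.polarCoord_symm_apply]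
    fun_prop
  have hpolar := Complex.integral_comp_polarCoord_symm ((ball (0:ℂ) r).indicator h0)
  have h1 : ∫ z in ball (0:ℂ) r, f (c + z) = ∫ z, (ball (0:ℂ) r).indicator h0 z :=
    (MeasureTheory.integral_indicator measurableSet_ball).symm
  rw [h1, ← hpolar]
  have htgt : MeasurableSet polarCoord.target := by
    rw [polarCoord_target]
    exact (measurableSet_Ioi.prod measurableSet_Ioo)
  have habs : ∀ p : ℝ × ℝ, 0 < p.1 → ‖(Complex.polarCoord.symm p : ℂ)‖ = p.1 := by
    intro p hp
    rw [Complex.norm_polarCoord_symm, abs_of_pos hp]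
  have hcong : ∀ p ∈ polarCoord.target,
      p.1 • (ball (0:ℂ) r).indicator h0 (Complex.polarCoord.symm p)
        = (Set.Ioo (0:ℝ) r ×ˢ Set.Ioo (-π) π).indicator G p := by
    intro p hp
    rw [polarCoord_target] at hp
    obtain ⟨hp1, hp2⟩ := hp
    rw [Set.mem_Ioi] at hp1
    by_cases hlt : p.1 < r
    · have hball : Complex.polarCoord.symm p ∈ ball (0:ℂ) r := by
        rw [mem_ball_zero_iff, habs p hp1]; exact hlt
      have hmemS : p ∈ Set.Ioo (0:ℝ) r ×ˢ Set.Ioo (-π) π :=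
        Set.mem_prod.mpr ⟨Set.mem_Ioo.mpr ⟨hp1, hlt⟩, hp2⟩
      rw [Set.indicator_of_mem hball, Set.indicator_of_mem hmemS]
    · have hball : Complex.polarCoord.symm p ∉ ball (0:ℂ) r := by
        rw [mem_ball_zero_iff, habs p hp1]; exact hlt
      have hmemS : p ∉ Set.Ioo (0:ℝ) r ×ˢ Set.Ioo (-π) π := by
        intro hmem
        exact hlt (Set.mem_Ioo.mp (Set.mem_prod.mp hmem).1).2
      rw [Set.indicator_of_notMem hball, Set.indicator_of_notMem hmemS, smul_zero]
  rw [MeasureTheory.setIntegral_congr_fun htgt hcong]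
  have hsub : (Set.Ioo (0:ℝ) r ×ˢ Set.Ioo (-π) π) ⊆ polarCoord.target := by
    rw [polarCoord_target]
    exact Set.prod_mono Set.Ioo_subset_Ioi_self subset_rfl
  have hS'meas : MeasurableSet (Set.Ioo (0:ℝ) r ×ˢ Set.Ioo (-π) π) :=
    measurableSet_Ioo.prod measurableSet_Ioo
  rw [MeasureTheory.setIntegral_indicator hS'meas, Set.inter_eq_self_of_subset_right hsub]
  have hint : IntegrableOn G (Set.Ioo (0:ℝ) r ×ˢ Set.Ioo (-π) π) (volume.prod volume) := by
    apply IntegrableOn.mono_set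
      (hGcont.continuousOn.integrableOn_compact
        ((isCompact_Icc (a := (0:ℝ)) (b := r)).prod (isCompact_Icc (a := -π) (b := π))))
    exact Set.prod_mono Set.Ioo_subset_Icc_self Set.Ioo_subset_Icc_self
  rw [show (volume : Measure (ℝ × ℝ)) = volume.prod volume from MeasureTheory.Measure.volume_eq_prod ℝ ℝ]
  rw [MeasureTheory.setIntegral_prod G hint]
  apply MeasureTheory.setIntegral_congr_fun measurableSet_Ioo
  intro ρ hρ
  show ∫ θ in Set.Ioo (-π) π, ρ • h0 (Complex.polarCoord.symm (ρ, θ)) = _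
  rw [MeasureTheory.integral_smul, smul_eq_mul]
  congr 1
  rw [← MeasureTheory.integral_Ioc_eq_integral_Ioo,
    ← intervalIntegral.integral_of_le (by linarith [pi_pos] : -π ≤ π)]
  apply intervalIntegral.integral_congr
  intro θ _
  show h0 (Complex.polarCoord.symm (ρ, θ)) = f (circleMap c ρ θ)
  rw [hh0]
  show f (c + Complex.polarCoord.symm (ρ, θ)) = _
  rw [hcirc]

lemma ball_mvp (u : ℂ → ℝ) (hu : ContDiff ℝ 2 u)
    (hh : ∀ z, fderiv ℝ (fderiv ℝ u) z 1 1 + fderiv ℝ (fderiv ℝ u) z Complex.I Complex.I = 0)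
    (c : ℂ) {r : ℝ} (hr : 0 < r) :
    ∫ z in ball c r, u z = (π * r^2) * u c := by
  obtain ⟨F, hF⟩ := exists_primitive (entire_g u hu hh)
  rw [polar_ball u hu.continuous c hr]
  have hinner : ∀ ρ ∈ Set.Ioo (0:ℝ) r,
      ρ * (∫ θ in (-π)..π, u (circleMap c ρ θ)) = ρ * (2 * π * u c) := by
    intro ρ hρ
    congr 1
    have hper : Function.Periodic (fun θ => u (circleMap c ρ θ)) (2*π) :=
      (periodic_circleMap c ρ).comp u
    calc ∫ θ in (-π)..π, u (circleMap c ρ θ)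
        = ∫ θ in (-π)..(-π + 2*π), u (circleMap c ρ θ) := by congr 1; ring
      _ = ∫ θ in (0:ℝ)..(0 + 2*π), u (circleMap c ρ θ) := hper.intervalIntegral_add_eq (-π) 0
      _ = 2 * π * u c := by rw [zero_add]; exact circle_mvp u hu hF c hρ.1
  rw [MeasureTheory.setIntegral_congr_fun measurableSet_Ioo hinner,
    MeasureTheory.integral_mul_const]
  have hid : ∫ ρ in Set.Ioo (0:ℝ) r, ρ = r^2/2 := by
    rw [← MeasureTheory.integral_Ioc_eq_integral_Ioo,
      ← intervalIntegral.integral_of_le hr.le, integral_id]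
    ring
  rw [hid]; ring

lemma vol_ball (c : ℂ) {r : ℝ} (hr : 0 < r) : (volume (ball c r)).toReal = π * r^2 := by
  have h1 : ∫ _z in ball c r, (1:ℝ) = (volume (ball c r)).toReal := by
    rw [setIntegral_const, smul_eq_mul, mul_one]; rfl
  rw [← h1, polar_ball (fun _ => (1:ℝ)) continuous_const c hr]
  have hinner : ∀ ρ ∈ Set.Ioo (0:ℝ) r,
      ρ * (∫ _θ in (-π)..π, (1:ℝ)) = ρ * (2 * π) := by
    intro ρ _
    rw [intervalIntegral.integral_const, smul_eq_mul, mul_one]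
    ring
  rw [MeasureTheory.setIntegral_congr_fun measurableSet_Ioo hinner,
    MeasureTheory.integral_mul_const]
  have hid : ∫ ρ in Set.Ioo (0:ℝ) r, ρ = r^2/2 := by
    rw [← MeasureTheory.integral_Ioc_eq_integral_Ioo,
      ← intervalIntegral.integral_of_le hr.le, integral_id]
    ring
  rw [hid]; ring



noncomputable def ee : ℂ ≃ₗᵢ[ℝ] EuclideanSpace ℝ (Fin 2) := Complex.orthonormalBasisOneI.repr

lemma ee_one : ee 1 = EuclideanSpace.single 0 1 := by
  have h0 : Complex.orthonormalBasisOneI 0 = 1 := by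
    rw [Complex.coe_orthonormalBasisOneI]; rfl
  rw [ee, ← h0, OrthonormalBasis.repr_self]

lemma ee_I : ee Complex.I = EuclideanSpace.single 1 1 := by
  have h1 : Complex.orthonormalBasisOneI 1 = Complex.I := by
    rw [Complex.coe_orthonormalBasisOneI]; rfl
  rw [ee, ← h1, OrthonormalBasis.repr_self]

lemma harm_transfer (v : EuclideanSpace ℝ (Fin 2) → ℝ)
    (hsmooth : ContDiff ℝ 2 v) (hharm : ∀ x, lap v x = 0) (z : ℂ) :
    fderiv ℝ (fderiv ℝ (fun w : ℂ => v (ee w))) z 1 1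
      + fderiv ℝ (fderiv ℝ (fun w : ℂ => v (ee w))) z Complex.I Complex.I = 0 := by
  set L : ℂ →L[ℝ] EuclideanSpace ℝ (Fin 2) :=
    ee.toContinuousLinearEquiv.toContinuousLinearMap with hL
  have hLe : ∀ w : ℂ, L w = ee w := fun w => rfl
  have hcomp := ContinuousLinearMap.iteratedFDeriv_comp_right L hsmooth z
    (i := 2) (by norm_num)
  have key : ∀ w : ℂ, fderiv ℝ (fderiv ℝ (fun w : ℂ => v (ee w))) z w w
      = iteratedFDeriv ℝ 2 v (ee z) (fun _ => ee w) := by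
    intro w
    have h2 := iteratedFDeriv_two_apply (𝕜 := ℝ) (fun w : ℂ => v (ee w)) z (fun _ => w)
    have : iteratedFDeriv ℝ 2 (fun w : ℂ => v (ee w)) z (fun _ => w)
        = iteratedFDeriv ℝ 2 v (ee z) (fun _ => ee w) := by
      have hfun : (fun w : ℂ => v (ee w)) = v ∘ L := rfl
      rw [hfun, hcomp]
      rw [ContinuousMultilinearMap.compContinuousLinearMap_apply]
      simp only [hLe]
    rw [← this, ← h2]
  rw [key 1, key Complex.I, ee_one, ee_I]
  have := hharm (ee z)
  rw [lap, Fin.sum_univ_two] at this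
  exact this

lemma mvp_E (v : EuclideanSpace ℝ (Fin 2) → ℝ)
    (hsmooth : ContDiff ℝ 2 v) (hharm : ∀ x, lap v x = 0)
    (c : EuclideanSpace ℝ (Fin 2)) {r : ℝ} (hr : 0 < r) :
    ∫ x in ball c r, v x = (π * r^2) * v c := by
  have hmp : MeasurePreserving (⇑ee) volume volume :=
    Complex.orthonormalBasisOneI.measurePreserving_repr
  have hemb : MeasurableEmbedding (⇑ee) :=
    ee.toHomeomorph.toMeasurableEquiv.measurableEmbedding
  have h := hmp.setIntegral_preimage_emb hemb v (ball c r)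
  rw [ee.preimage_ball] at h
  rw [← h]
  have hL2 : ContDiff ℝ 2 (fun w : ℂ => ee w) :=
    ee.toContinuousLinearEquiv.toContinuousLinearMap.contDiff
  have hu : ContDiff ℝ 2 (fun w : ℂ => v (ee w)) := hsmooth.comp hL2
  have := ball_mvp (fun w : ℂ => v (ee w)) hu (harm_transfer v hsmooth hharm)
    (ee.symm c) hr
  rw [this]
  simp [ee.apply_symm_apply]

lemma vol_E (c : EuclideanSpace ℝ (Fin 2)) {r : ℝ} (hr : 0 < r) :
    (volume (ball c r)).toReal = π * r^2 := by
  have hmp : MeasurePreserving (⇑ee) volume volume :=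
    Complex.orthonormalBasisOneI.measurePreserving_repr
  have h := hmp.measure_preimage (s := ball c r) measurableSet_ball.nullMeasurableSet
  rw [ee.preimage_ball] at h
  rw [← h, vol_ball _ hr]

end HLGC

open Filter in
/-- A harmonic function on `ℝ²` whose unit-ball averages grow at most logarithmically
from above is constant. -/
theorem harmonic_log_growth_constant (v : EuclideanSpace ℝ (Fin 2) → ℝ)
    (hsmooth : ContDiff ℝ 2 v) (hharm : ∀ x, lap v x = 0)
    (C : ℝ) (hC : 0 < C)
    (havg : ∀ x₀ : EuclideanSpace ℝ (Fin 2),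
      (⨍ x in ball x₀ 1, v x) ≤ C + C * Real.log (2 + ‖x₀‖)) :
    ∃ c : ℝ, ∀ x, v x = c := by
  have hMVP := HLGC.mvp_E v hsmooth hharm
  have hcont : Continuous v := hsmooth.continuous
  have hInt : ∀ (c : EuclideanSpace ℝ (Fin 2)) (r : ℝ), IntegrableOn v (ball c r) := fun c r =>
    (hcont.continuousOn.integrableOn_compact (isCompact_closedBall c r)).mono_set
      ball_subset_closedBall
  have hpi : (0:ℝ) < π := pi_pos
  have hpt : ∀ x : EuclideanSpace ℝ (Fin 2), v x ≤ C + C * Real.log (2 + ‖x‖) := by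
    intro x
    have h := havg x
    rw [setAverage_eq, measureReal_def, HLGC.vol_E x one_pos, hMVP x one_pos, smul_eq_mul,
      inv_mul_cancel_left₀ (by positivity : π * (1:ℝ)^2 ≠ 0)] at h
    exact h
  have key : ∀ x y : EuclideanSpace ℝ (Fin 2), v x ≤ v y := by
    intro x y
    by_cases hxy : x = y
    · rw [hxy]
    set d := dist x y with hd
    have hd0 : 0 < d := dist_pos.mpr hxy
    set a := ‖x‖ + ‖y‖ with ha
    have ha0 : 0 ≤ a := by positivity
    set K : ℝ → ℝ := fun R => C + C * Real.log (2 + (R + a)) with hKdef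
    have est : ∀ R : ℝ, d < R → v x - v y ≤ (K R - v y) * (2*d/R) := by
      intro R hR
      have hR0 : 0 < R := lt_trans hd0 hR
      set ρ := R - d with hρ
      have hρ0 : 0 < ρ := by rw [hρ]; linarith
      have hbig : ∀ z ∈ ball x R ∪ ball y R, v z ≤ K R := by
        intro z hz
        have hzn : ‖z‖ ≤ R + a := by
          have hx' : ‖z‖ ≤ dist z x + ‖x‖ := by
            calc ‖z‖ = dist z 0 := (dist_zero_right z).symm
              _ ≤ dist z x + dist x 0 := dist_triangle z x 0
              _ = dist z x + ‖x‖ := by rw [dist_zero_right]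
          have hy' : ‖z‖ ≤ dist z y + ‖y‖ := by
            calc ‖z‖ = dist z 0 := (dist_zero_right z).symm
              _ ≤ dist z y + dist y 0 := dist_triangle z y 0
              _ = dist z y + ‖y‖ := by rw [dist_zero_right]
          rcases hz with hz | hz
          · have := mem_ball.mp hz
            have hny : 0 ≤ ‖y‖ := norm_nonneg _
            rw [ha]; linarith
          · have := mem_ball.mp hz
            have hnx : 0 ≤ ‖x‖ := norm_nonneg _
            rw [ha]; linarith
        calc v z ≤ C + C * Real.log (2 + ‖z‖) := hpt z
          _ ≤ K R := by
              have hlog : Real.log (2 + ‖z‖) ≤ Real.log (2 + (R + a)) :=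
                Real.log_le_log (by positivity) (by linarith)
              have h2 : C * Real.log (2 + ‖z‖) ≤ C * Real.log (2 + (R + a)) :=
                mul_le_mul_of_nonneg_left hlog hC.le
              show C + C * Real.log (2 + ‖z‖) ≤ C + C * Real.log (2 + (R + a))
              linarith
      set w : EuclideanSpace ℝ (Fin 2) → ℝ := fun z => K R - v z with hw
      have hwint : ∀ (c' : EuclideanSpace ℝ (Fin 2)) (r' : ℝ), IntegrableOn w (ball c' r') := by
        intro c' r'
        exact (integrableOn_const measure_ball_lt_top.ne).sub (hInt c' r')
      have hwval : ∀ (c' : EuclideanSpace ℝ (Fin 2)) (r' : ℝ), 0 < r' →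
          ∫ z in ball c' r', w z = π * r'^2 * (K R - v c') := by
        intro c' r' hr'
        rw [hw]
        rw [MeasureTheory.integral_sub (integrableOn_const (C := K R) measure_ball_lt_top.ne)
          (hInt c' r'), setIntegral_const, measureReal_def, HLGC.vol_E c' hr', hMVP c' hr', smul_eq_mul]
        ring
      have hxball : ∫ z in ball x R ∩ ball y R, w z ≤ ∫ z in ball x R, w z := by
        apply setIntegral_mono_set (hwint x R)
        · exact (ae_restrict_iff' measurableSet_ball).mpr
            (ae_of_all _ (fun z hz => sub_nonneg.mpr (hbig z (Or.inl hz))))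
        · exact HasSubset.Subset.eventuallyLE Set.inter_subset_left
      have hsplit := MeasureTheory.integral_inter_add_diff (s := ball y R) (t := ball x R)
        measurableSet_ball (hwint y R) (f := w)
      have hdiffsub : ball y R \ ball x R ⊆ ball y R \ ball y ρ := by
        rintro z ⟨hz1, hz2⟩
        refine ⟨hz1, fun hz3 => hz2 ?_⟩
        rw [mem_ball] at hz3 ⊢
        calc dist z x ≤ dist z y + dist y x := dist_triangle z y x
          _ < ρ + d := by rw [dist_comm y x, ← hd]; linarith
          _ = R := by rw [hρ]; ring
      have hdiffle : ∫ z in ball y R \ ball x R, w z ≤ ∫ z in ball y R \ ball y ρ, w z := by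
        apply setIntegral_mono_set ((hwint y R).mono_set Set.diff_subset)
        · exact (ae_restrict_iff' (measurableSet_ball.diff measurableSet_ball)).mpr
            (ae_of_all _ (fun z hz => sub_nonneg.mpr (hbig z (Or.inr hz.1))))
        · exact HasSubset.Subset.eventuallyLE hdiffsub
      have hannulus := MeasureTheory.integral_inter_add_diff (s := ball y R) (t := ball y ρ)
        measurableSet_ball (hwint y R) (f := w)
      have hinterρ : ball y R ∩ ball y ρ = ball y ρ :=
        Set.inter_eq_self_of_subset_right (ball_subset_ball (by linarith))
      rw [hinterρ] at hannulus
      have hintercomm : ∫ z in ball y R ∩ ball x R, w z = ∫ z in ball x R ∩ ball y R, w z := by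
        rw [Set.inter_comm]
      have hcmp : ∫ z in ball y ρ, w z ≤ ∫ z in ball x R, w z := by
        linarith [hxball, hdiffle, hsplit, hannulus, hintercomm]
      rw [hwval x R hR0, hwval y ρ hρ0] at hcmp
      have hKy : 0 ≤ K R - v y := by
        have h1 := hpt y
        have hlog : Real.log (2 + ‖y‖) ≤ Real.log (2 + (R + a)) :=
          Real.log_le_log (by positivity) (by rw [ha]; nlinarith [norm_nonneg x])
        have h2 : C * Real.log (2 + ‖y‖) ≤ C * Real.log (2 + (R + a)) :=
          mul_le_mul_of_nonneg_left hlog hC.le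
        rw [hKdef]; simp only; linarith
      have h5' : ρ^2 * (K R - v y) ≤ R^2 * (K R - v x) := by
        rw [mul_assoc, mul_assoc] at hcmp
        exact le_of_mul_le_mul_left hcmp hpi
      have h6 : R^2 * (v x - v y) ≤ (2*d*R) * (K R - v y) := by
        rw [hρ] at h5'
        nlinarith [h5', mul_nonneg (sq_nonneg d) hKy, hKy]
      have h7 : v x - v y ≤ ((2*d*R) * (K R - v y))/R^2 := by
        rw [le_div_iff₀ (by positivity : (0:ℝ) < R^2)]
        linarith [h6]
      calc v x - v y ≤ ((2*d*R) * (K R - v y))/R^2 := h7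
        _ = (K R - v y) * (2*d/R) := by field_simp
    have hlim : Tendsto (fun R => (K R - v y) * (2*d/R)) atTop (nhds 0) := by
      have htend1 : Tendsto (fun R : ℝ => ((C - v y) * (2*d)) * R⁻¹) atTop (nhds 0) := by
        simpa using tendsto_inv_atTop_zero.const_mul ((C - v y) * (2*d))
      have hcomp : Tendsto (fun R : ℝ => 2 + (R + a)) atTop atTop := by
        apply tendsto_atTop_add_const_left
        exact tendsto_atTop_add_const_right atTop a tendsto_id
      have h1 : (fun R : ℝ => Real.log (2 + (R + a))) =o[atTop] (fun R => 2 + (R + a)) :=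
        Real.isLittleO_log_id_atTop.comp_tendsto hcomp
      have h2 : (fun R : ℝ => 2 + (R + a)) =O[atTop] (fun R : ℝ => R) := by
        rw [Asymptotics.isBigO_iff]
        refine ⟨2, ?_⟩
        filter_upwards [eventually_ge_atTop (2 + a), eventually_ge_atTop 0] with R hR1 hR2
        rw [Real.norm_eq_abs, Real.norm_eq_abs, abs_of_nonneg (by linarith), abs_of_nonneg hR2]
        linarith
      have hlog : Tendsto (fun R : ℝ => Real.log (2 + (R + a)) / R) atTop (nhds 0) :=
        (h1.trans_isBigO h2).tendsto_div_nhds_zero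
      have hT2 : Tendsto (fun R : ℝ => (2*d*C) * (Real.log (2+(R+a))/R)) atTop (nhds 0) := by
        simpa using hlog.const_mul (2*d*C)
      have hsum := htend1.add hT2
      rw [add_zero] at hsum
      apply hsum.congr
      intro R
      rw [hKdef]
      simp only
      rcases eq_or_ne R 0 with hR | hR
      · simp [hR]
      · field_simp
        ring
    have hev : ∀ᶠ R in atTop, v x - v y ≤ (K R - v y) * (2*d/R) :=
      (eventually_gt_atTop d).mono est
    have := ge_of_tendsto hlim hev
    linarith
  exact ⟨v 0, fun x => le_antisymm (key x 0) (key 0 x)⟩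


end Aux
end
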